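/- arXiv:1005.0728 — 2 statements merged into one kernel-verified Lean document; each statement's English description precedes it below -/
import Mathlib

section
/- For all real numbers x and y, and every p with 1/2 < p < 1, |(x⁺)^{2p} − (y⁺)^{2p}| ≤ (2 + |x| + |y|)·|x − y|^p. -/
open Real

lemma real_rpow_add_le_add_rpow {a b p : ℝ} (ha : 0 ≤ a) (hb : 0 ≤ b)
    (hp : 0 ≤ p) (hp1 : p ≤ 1) : (a + b) ^ p ≤ a ^ p + b ^ p := by
  have h := NNReal.rpow_add_le_add_rpow ⟨a, ha⟩ ⟨b, hb⟩ hp hp1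
  exact_mod_cast h

lemma rpow_sub_rpow_le {a b p : ℝ} (hb : 0 ≤ b) (hba : b ≤ a)
    (hp : 0 ≤ p) (hp1 : p ≤ 1) : a ^ p - b ^ p ≤ (a - b) ^ p := by
  have h : a ^ p ≤ (a - b) ^ p + b ^ p := by
    have := real_rpow_add_le_add_rpow (a := a - b) (b := b) (by linarith) hb hp hp1
    simpa using this
  linarith

lemma abs_rpow_sub_rpow_le {a b p : ℝ} (ha : 0 ≤ a) (hb : 0 ≤ b)
    (hp : 0 ≤ p) (hp1 : p ≤ 1) : |a ^ p - b ^ p| ≤ |a - b| ^ p := by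
  rcases le_total b a with h | h
  · rw [abs_of_nonneg (sub_nonneg.mpr (Real.rpow_le_rpow hb h hp)),
      abs_of_nonneg (sub_nonneg.mpr h)]
    exact rpow_sub_rpow_le hb h hp hp1
  · rw [abs_sub_comm, abs_sub_comm a b,
      abs_of_nonneg (sub_nonneg.mpr (Real.rpow_le_rpow ha h hp)),
      abs_of_nonneg (sub_nonneg.mpr h)]
    exact rpow_sub_rpow_le ha h hp hp1

lemma rpow_le_one_add {a p : ℝ} (ha : 0 ≤ a) (hp : 0 ≤ p) (hp1 : p ≤ 1) :
    a ^ p ≤ 1 + a := by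
  rcases le_total a 1 with h | h
  · have := Real.rpow_le_one ha h hp
    linarith
  · have := Real.rpow_le_rpow_of_exponent_le h hp1
    rw [Real.rpow_one] at this
    linarith

theorem pos_part_rpow_two_p_abs_sub_le (x y p : ℝ) (hp0 : 1/2 < p) (hp1 : p < 1) :
    |max x 0 ^ (2 * p) - max y 0 ^ (2 * p)| ≤ (2 + |x| + |y|) * |x - y| ^ p := by
  set a := max x 0 with hadef
  set b := max y 0 with hbdef
  have ha : 0 ≤ a := le_max_right _ _
  have hb : 0 ≤ b := le_max_right _ _
  have hpnn : 0 ≤ p := by linarith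
  have hax : a ≤ |x| := max_le (le_abs_self x) (abs_nonneg x)
  have hby : b ≤ |y| := max_le (le_abs_self y) (abs_nonneg y)
  set u := a ^ p with hudef
  set v := b ^ p with hvdef
  have hu : 0 ≤ u := Real.rpow_nonneg ha p
  have hv : 0 ≤ v := Real.rpow_nonneg hb p
  have hsq : ∀ c : ℝ, 0 ≤ c → c ^ (2 * p) = (c ^ p) ^ 2 := by
    intro c hc
    rw [mul_comm, Real.rpow_mul hc, Real.rpow_two]
  rw [hsq a ha, hsq b hb, ← hudef, ← hvdef]
  have key : u ^ 2 - v ^ 2 = (u + v) * (u - v) := by ring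
  rw [key, abs_mul, abs_of_nonneg (by linarith : (0:ℝ) ≤ u + v)]
  have h1 : u + v ≤ 2 + |x| + |y| := by
    have hu1 : u ≤ 1 + a := rpow_le_one_add ha hpnn hp1.le
    have hv1 : v ≤ 1 + b := rpow_le_one_add hb hpnn hp1.le
    linarith
  have h2 : |u - v| ≤ |x - y| ^ p := by
    calc |u - v| ≤ |a - b| ^ p := abs_rpow_sub_rpow_le ha hb hpnn hp1.le
      _ ≤ |x - y| ^ p :=
        Real.rpow_le_rpow (abs_nonneg _) (abs_max_sub_max_le_abs x y 0) hpnn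
  exact mul_le_mul h1 h2 (abs_nonneg _) (by positivity)
end

section
/- Let (ξ_k)_{k≥1} be i.i.d. standard Gaussian random variables, p ∈ [1/2, 1), μ ∈ ℝ, σ > 0, T > 0, and X_0 > 0. Define the Euler-Maruyama scheme X^n_{k} = X^n_{k−1} + μ(T/n)(X^n_{k−1})⁺ + σ((X^n_{k−1})⁺)^p √(T/n) ξ_k with X^n_0 = X_0. Then there is a constant r independent of n such that max_{1 ≤ k ≤ n} E[(X^n_k)²] ≤ r for all sufficiently large n. -/
open MeasureTheory ProbabilityTheory Real Filter

lemma em_pdf_toReal (x : ℝ) :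
    (gaussianPDF 0 1 x).toReal = (Real.sqrt (2*π))⁻¹ * Real.exp (-(1/2) * x^2) := by
  rw [gaussianPDF_def, ENNReal.toReal_ofReal (gaussianPDFReal_nonneg _ _ _),
    gaussianPDFReal_def]
  push_cast
  rw [show -(x-0)^2/(2*1) = -(1/2)*x^2 by ring]
  norm_num

lemma em_integrable_gaussian {f : ℝ → ℝ}
    (h : Integrable (fun x => f x * Real.exp (-(1/2) * x^2)) volume) :
    Integrable f (gaussianReal 0 1) := by
  rw [gaussianReal_of_var_ne_zero 0 one_ne_zero,
    integrable_withDensity_iff (measurable_gaussianPDF 0 1)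
      (ae_of_all _ fun x => ENNReal.ofReal_lt_top)]
  refine (h.const_mul ((Real.sqrt (2*π))⁻¹)).congr (ae_of_all _ fun x => ?_)
  simp only [em_pdf_toReal]; ring

lemma em_gaussian_int_sq : Integrable (fun x : ℝ => x ^ 2) (gaussianReal 0 1) := by
  apply em_integrable_gaussian
  have := integrable_rpow_mul_exp_neg_mul_sq (b := 1/2) (by norm_num) (s := 2) (by norm_num)
  refine this.congr (ae_of_all _ fun x => ?_)
  simp only [Real.rpow_two]

lemma em_gaussian_int_id : Integrable (fun x : ℝ => x) (gaussianReal 0 1) := by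
  apply em_integrable_gaussian
  exact integrable_mul_exp_neg_mul_sq (by norm_num)

lemma em_gaussian_mean : ∫ x, x ∂(gaussianReal 0 1) = 0 := by
  have hmap : (gaussianReal 0 1).map (fun x => (-1:ℝ) * x) = gaussianReal 0 1 := by
    rw [show (fun x => (-1:ℝ) * x) = ((-1:ℝ) * ·) from rfl, gaussianReal_map_const_mul]
    norm_num
  have h2 : ∫ x, x ∂(gaussianReal 0 1) = ∫ x, (-1:ℝ) * x ∂(gaussianReal 0 1) := by
    conv_lhs => rw [← hmap]
    exact integral_map (f := fun x => x) ((measurable_id.const_mul (-1:ℝ)).aemeasurable)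
      aestronglyMeasurable_id
  have h3 : ∫ x, (-1:ℝ) * x ∂(gaussianReal 0 1) = - ∫ x, x ∂(gaussianReal 0 1) := by
    rw [integral_const_mul]; ring
  linarith [h2, h3]

lemma em_rpow_sq_le {x pp : ℝ} (hp0 : 0 ≤ pp) (hp1 : pp ≤ 1) :
    (max x 0 ^ pp)^2 ≤ 1 + x^2 := by
  set m := max x 0 with hm
  have hm0 : 0 ≤ m := le_max_right x 0
  have hmx : m ≤ |x| := max_le (le_abs_self x) (abs_nonneg x)
  have h1 : (m ^ pp)^2 = m ^ (pp*2) := by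
    rw [← Real.rpow_natCast (m ^ pp) 2, ← Real.rpow_mul hm0]; norm_num
  rw [h1]
  rcases le_or_gt m 1 with h | h
  · have := Real.rpow_le_one hm0 h (by positivity : (0:ℝ) ≤ pp*2)
    nlinarith [sq_nonneg x]
  · have h2 : m ^ (pp*2) ≤ m ^ (2:ℝ) := Real.rpow_le_rpow_of_exponent_le h.le (by linarith)
    rw [Real.rpow_two] at h2
    have h4 : m^2 ≤ x^2 := by nlinarith [sq_abs x]
    nlinarith [sq_nonneg x]

lemma em_rpow_le {x pp : ℝ} (hp0 : 0 ≤ pp) (hp1 : pp ≤ 1) :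
    max x 0 ^ pp ≤ 1 + |x| := by
  have h1 := em_rpow_sq_le (x := x) hp0 hp1
  have h2 : (0:ℝ) ≤ max x 0 ^ pp := Real.rpow_nonneg (le_max_right x 0) pp
  nlinarith [sq_abs x, abs_nonneg x]

set_option maxHeartbeats 1000000 in
theorem euler_maruyama_second_moment_bound
    {Ω : Type*} [MeasurableSpace Ω] (P : Measure Ω) [IsProbabilityMeasure P]
    (ξ : ℕ → Ω → ℝ) (hξm : ∀ k, Measurable (ξ k))
    (hξindep : iIndepFun ξ P)
    (hξlaw : ∀ k, Measure.map (ξ k) P = gaussianReal 0 1)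
    (p μ σ T X₀ : ℝ) (hp : 1/2 ≤ p) (hp1 : p < 1) (hσ : 0 < σ) (hT : 0 < T)
    (hX₀ : 0 < X₀)
    (X : ℕ → ℕ → Ω → ℝ) (hXm : ∀ n k, Measurable (X n k))
    (hX0 : ∀ n, X n 0 = fun _ => X₀)
    (hrec : ∀ n : ℕ, 1 ≤ n → ∀ k : ℕ, ∀ ω,
      X n (k + 1) ω = X n k ω + μ * (T / n) * max (X n k ω) 0
        + σ * max (X n k ω) 0 ^ p * Real.sqrt (T / n) * ξ (k + 1) ω)
    (hξX : ∀ n k, IndepFun (ξ (k + 1)) (fun ω => fun i : Fin (k + 1) => X n i ω) P) :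
    ∃ r : ℝ, 0 < r ∧ ∃ N : ℕ, ∀ n : ℕ, N ≤ n → ∀ k : ℕ, k ≤ n →
      ∫⁻ ω, ENNReal.ofReal ((X n k ω) ^ 2) ∂P ≤ ENNReal.ofReal r := by
  have hp0 : (0:ℝ) ≤ p := by linarith
  set c₂ : ℝ := ∫ x, x ^ 2 ∂(gaussianReal 0 1) with hc₂def
  have hc₂0 : 0 ≤ c₂ := integral_nonneg fun x => sq_nonneg x
  set D : ℝ := 2 * |μ| + μ^2 + σ^2 * c₂ with hDdef
  have hD0 : 0 ≤ D := by positivity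
  refine ⟨Real.exp (D * T) * (X₀^2 + 1), by positivity, max 1 ⌈T⌉₊, fun n hn k hk => ?_⟩
  have hn1 : 1 ≤ n := le_trans (le_max_left _ _) hn
  have hnpos : (0:ℝ) < n := by exact_mod_cast hn1
  set h : ℝ := T / n with hhdef
  have hh : 0 < h := div_pos hT hnpos
  have hh1 : h ≤ 1 := by
    rw [hhdef, div_le_one hnpos]
    calc T ≤ (⌈T⌉₊ : ℝ) := Nat.le_ceil T
    _ ≤ n := by exact_mod_cast le_trans (le_max_right _ _) hn
  -- the core induction
  have key : ∀ k : ℕ, k ≤ n → MemLp (X n k) 2 P ∧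
      ∫ ω, (X n k ω)^2 ∂P + 1 ≤ Real.exp (D * (h * k)) * (X₀^2 + 1) := by
    intro k
    induction k with
    | zero =>
      intro _
      rw [hX0 n]
      refine ⟨memLp_const X₀, ?_⟩
      simp
    | succ k ih =>
      intro hkn
      obtain ⟨hL2, hb⟩ := ih (le_trans (Nat.le_succ k) hkn)
      set Y : Ω → ℝ := X n k with hYdef
      set Z : Ω → ℝ := ξ (k+1) with hZdef
      have hYmeas : Measurable Y := hXm n k
      have hZmeas : Measurable Z := hξm (k+1)
      have hindY : IndepFun Z Y P := by
        have h1 := (hξX n k).comp measurable_id (measurable_pi_apply (Fin.last k))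
        have h2 : ((fun v : Fin (k+1) → ℝ => v (Fin.last k)) ∘
            (fun ω => fun i : Fin (k+1) => X n i ω)) = Y := by
          funext ω; simp [hYdef, Fin.val_last]
        rwa [h2, Function.id_comp] at h1
      set a : ℝ → ℝ := fun x => x + μ * h * max x 0 with hadef
      set b : ℝ → ℝ := fun x => σ * max x 0 ^ p * Real.sqrt h with hbdef
      have hameas : Measurable a := by
        apply Measurable.add measurable_id
        exact (measurable_id.max measurable_const).const_mul _
      have hbmeas : Measurable b := by
        apply Measurable.mul_const
        apply Measurable.const_mul
        exact (measurable_id.max measurable_const).pow measurable_const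
      have hXrec : X n (k+1) = fun ω => a (Y ω) + b (Y ω) * Z ω := by
        funext ω; rw [hrec n hn1 k ω]
      set A : Ω → ℝ := fun ω => a (Y ω) with hAdef
      set B : Ω → ℝ := fun ω => b (Y ω) with hBdef
      have hAmeas : Measurable A := hameas.comp hYmeas
      have hBmeas : Measurable B := hbmeas.comp hYmeas
      -- pointwise bounds
      have habs : ∀ x : ℝ, |a x| ≤ (1 + |μ| * h) * |x| := by
        intro x
        have h1 : |a x| ≤ |x| + |μ * h * max x 0| := abs_add_le _ _
        have h2 : |μ * h * max x 0| = |μ| * h * max x 0 := by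
          rw [abs_mul, abs_mul, abs_of_pos hh, abs_of_nonneg (le_max_right x 0)]
        have h3 : max x 0 ≤ |x| := max_le (le_abs_self x) (abs_nonneg x)
        have h4 : (0:ℝ) ≤ |μ| * h := by positivity
        nlinarith [mul_le_mul_of_nonneg_left h3 h4]
      have hasq : ∀ x : ℝ, (a x)^2 ≤ (1 + (2*|μ| + μ^2) * h) * x^2 := by
        intro x
        have h1 := habs x
        have h2 : (a x)^2 ≤ ((1 + |μ| * h) * |x|)^2 := by
          nlinarith [abs_nonneg (a x), abs_nonneg x, sq_abs (a x),
            mul_nonneg (by positivity : (0:ℝ) ≤ 1 + |μ| *h) (abs_nonneg x)]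
        have h3 : ((1 + |μ| * h) * |x|) ^ 2 = (1 + 2 * (|μ| * h) + (|μ| * h) ^ 2) * x ^ 2 := by
          rw [mul_pow, sq_abs]; ring
        have h6 : (|μ| * h) ^ 2 ≤ μ ^ 2 * h := by
          have h7 : (|μ| * h) ^ 2 = μ ^ 2 * (h * h) := by
            rw [mul_pow, sq_abs]; ring
          rw [h7]
          have : h * h ≤ h := by nlinarith
          nlinarith [sq_nonneg μ]
        nlinarith [sq_nonneg x, mul_le_mul_of_nonneg_right h6 (sq_nonneg x)]
      have hbsq : ∀ x : ℝ, (b x)^2 ≤ σ^2 * h * (1 + x^2) := by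
        intro x
        have h1 : (b x)^2 = σ^2 * h * (max x 0 ^ p)^2 := by
          simp only [hbdef]
          rw [mul_pow, mul_pow, Real.sq_sqrt hh.le]; ring
        rw [h1]
        have h2 := em_rpow_sq_le (x := x) hp0 hp1.le
        nlinarith [mul_nonneg (sq_nonneg σ) hh.le]
      -- MemLp facts
      have hAL2 : MemLp A 2 P := by
        refine hL2.of_le_mul (c := 1 + |μ| * h) hAmeas.aestronglyMeasurable
          (ae_of_all _ fun ω => ?_)
        simpa [Real.norm_eq_abs] using habs (Y ω)
      have hGL2 : MemLp (fun ω => 1 + |Y ω|) 2 P := by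
        have := (memLp_const (μ := P) (1:ℝ)).add hL2.norm
        simp only [Real.norm_eq_abs] at this
        exact this
      have hBL2 : MemLp B 2 P := by
        refine hGL2.of_le_mul (c := σ * Real.sqrt h) hBmeas.aestronglyMeasurable
          (ae_of_all _ fun ω => ?_)
        have h1 := em_rpow_le (x := Y ω) hp0 hp1.le
        have h4 : (0:ℝ) ≤ 1 + |Y ω| := by positivity
        have h5 : (0:ℝ) ≤ max (Y ω) 0 ^ p := Real.rpow_nonneg (le_max_right _ _) p
        rw [Real.norm_eq_abs, Real.norm_eq_abs]
        simp only [hBdef, hbdef]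
        rw [abs_of_nonneg (by positivity), abs_of_nonneg h4]
        calc σ * max (Y ω) 0 ^ p * Real.sqrt h ≤ σ * (1 + |Y ω|) * Real.sqrt h := by
              apply mul_le_mul_of_nonneg_right _ (Real.sqrt_nonneg h)
              exact mul_le_mul_of_nonneg_left h1 hσ.le
        _ = σ * Real.sqrt h * (1 + |Y ω|) := by ring
      -- Z facts
      have hZint : Integrable Z P := by
        have h1 := em_gaussian_int_id
        rw [← hξlaw (k+1)] at h1
        exact (integrable_map_measure aestronglyMeasurable_id hZmeas.aemeasurable).1 h1
      have hZsqint : Integrable (fun ω => Z ω ^ 2) P := by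
        have h1 := em_gaussian_int_sq
        rw [← hξlaw (k+1)] at h1
        exact (integrable_map_measure (by fun_prop) hZmeas.aemeasurable).1 h1
      have hZmean : ∫ ω, Z ω ∂P = 0 := by
        have h1 : ∫ x, x ∂(Measure.map Z P) = ∫ ω, Z ω ∂P :=
          integral_map (f := fun x => x) hZmeas.aemeasurable aestronglyMeasurable_id
        rw [hξlaw (k+1)] at h1
        rw [← h1, em_gaussian_mean]
      have hZsqmean : ∫ ω, Z ω ^ 2 ∂P = c₂ := by
        have h1 : ∫ x, x ^ 2 ∂(Measure.map Z P) = ∫ ω, Z ω ^ 2 ∂P :=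
          integral_map hZmeas.aemeasurable (by fun_prop)
        rw [hξlaw (k+1)] at h1
        rw [← h1, hc₂def]
      -- integrability of pieces
      have iY2 : Integrable (fun ω => Y ω ^ 2) P :=
        (memLp_two_iff_integrable_sq hYmeas.aestronglyMeasurable).1 hL2
      have iA2 : Integrable (fun ω => A ω ^ 2) P :=
        (memLp_two_iff_integrable_sq hAmeas.aestronglyMeasurable).1 hAL2
      have iB2 : Integrable (fun ω => B ω ^ 2) P :=
        (memLp_two_iff_integrable_sq hBmeas.aestronglyMeasurable).1 hBL2
      have iAB : Integrable (fun ω => A ω * B ω) P := by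
        have h1 : MemLp (A • B) 1 P := by
          haveI : ENNReal.HolderTriple 2 2 1 := ⟨by rw [inv_one, ENNReal.inv_two_add_inv_two]⟩
          exact MemLp.smul hBL2 hAL2
        exact memLp_one_iff_integrable.1 h1
      have hindAB : IndepFun (fun ω => A ω * B ω) Z P := by
        have h1 := hindY.symm.comp (φ := fun x => a x * b x) (ψ := id)
          (hameas.mul hbmeas) measurable_id
        rwa [Function.id_comp] at h1
      have iABZ : Integrable (fun ω => A ω * B ω * Z ω) P :=
        hindAB.integrable_mul iAB hZint
      have hABZint : ∫ ω, A ω * B ω * Z ω ∂P = 0 := by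
        have h1 := hindAB.integral_mul_eq_mul_integral iAB.aestronglyMeasurable hZint.aestronglyMeasurable
        rw [show ((fun ω => A ω * B ω) * Z) = fun ω => A ω * B ω * Z ω from rfl] at h1
        rw [h1, hZmean, mul_zero]
      have hindB2Z2 : IndepFun (fun ω => B ω ^ 2) (fun ω => Z ω ^ 2) P :=
        hindY.symm.comp (φ := fun x => b x ^ 2) (ψ := fun x => x ^ 2)
          (hbmeas.pow measurable_const) (measurable_id.pow measurable_const)
      have iB2Z2 : Integrable (fun ω => B ω ^ 2 * Z ω ^ 2) P :=
        hindB2Z2.integrable_mul iB2 hZsqint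
      have hB2Z2int : ∫ ω, B ω ^ 2 * Z ω ^ 2 ∂P = (∫ ω, B ω ^ 2 ∂P) * c₂ := by
        have h1 := hindB2Z2.integral_mul_eq_mul_integral iB2.aestronglyMeasurable hZsqint.aestronglyMeasurable
        rw [show ((fun ω => B ω ^ 2) * fun ω => Z ω ^ 2) = fun ω => B ω ^ 2 * Z ω ^ 2
          from rfl] at h1
        rw [h1, hZsqmean]
      -- expand the square
      have hexp : ∀ ω, (X n (k+1) ω)^2
          = A ω^2 + 2 * (A ω * B ω * Z ω) + B ω^2 * Z ω^2 := by
        intro ω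
        rw [hXrec]; ring
      have inext : Integrable (fun ω => (X n (k+1) ω)^2) P := by
        refine ((iA2.add (iABZ.const_mul 2)).add iB2Z2).congr (ae_of_all _ fun ω => ?_)
        simp only [Pi.add_apply]
        exact (hexp ω).symm
      have hL2next : MemLp (X n (k+1)) 2 P :=
        (memLp_two_iff_integrable_sq (hXm n (k+1)).aestronglyMeasurable).2 inext
      have hint_eq : ∫ ω, (X n (k+1) ω)^2 ∂P
          = ∫ ω, A ω^2 ∂P + (∫ ω, B ω^2 ∂P) * c₂ := by
        calc ∫ ω, (X n (k+1) ω)^2 ∂P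
            = ∫ ω, (A ω^2 + 2 * (A ω * B ω * Z ω) + B ω^2 * Z ω^2) ∂P :=
              integral_congr_ae (ae_of_all _ fun ω => hexp ω)
        _ = (∫ ω, (A ω^2 + 2 * (A ω * B ω * Z ω)) ∂P) + ∫ ω, B ω^2 * Z ω^2 ∂P :=
              integral_add (iA2.add (iABZ.const_mul 2)) iB2Z2
        _ = (∫ ω, A ω^2 ∂P) + (∫ ω, 2 * (A ω * B ω * Z ω) ∂P) + ∫ ω, B ω^2 * Z ω^2 ∂P := by
              rw [integral_add iA2 (iABZ.const_mul 2)]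
        _ = _ := by
              rw [integral_const_mul, hABZint, hB2Z2int]; ring
      -- bounds on the integrals
      have hintA : ∫ ω, A ω^2 ∂P ≤ (1 + (2*|μ|+μ^2)*h) * ∫ ω, Y ω^2 ∂P := by
        calc ∫ ω, A ω^2 ∂P ≤ ∫ ω, (1 + (2*|μ|+μ^2)*h) * Y ω^2 ∂P :=
              integral_mono iA2 (iY2.const_mul _) (fun ω => hasq (Y ω))
        _ = _ := integral_const_mul _ _
      have hintB : ∫ ω, B ω^2 ∂P ≤ σ^2*h*(1 + ∫ ω, Y ω^2 ∂P) := by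
        calc ∫ ω, B ω^2 ∂P ≤ ∫ ω, σ^2*h*(1 + Y ω^2) ∂P :=
              integral_mono iB2 (((integrable_const 1).add iY2).const_mul _)
                (fun ω => hbsq (Y ω))
        _ = σ^2*h*(1 + ∫ ω, Y ω^2 ∂P) := by
              rw [integral_const_mul, integral_add (integrable_const 1) iY2, integral_const]
              simp
      have hm0 : (0:ℝ) ≤ ∫ ω, Y ω^2 ∂P := integral_nonneg fun ω => sq_nonneg _
      refine ⟨hL2next, ?_⟩
      set m : ℝ := ∫ ω, Y ω^2 ∂P with hmdef
      have step1 : ∫ ω, (X n (k+1) ω)^2 ∂P + 1 ≤ (1 + D*h) * (m + 1) := by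
        rw [hint_eq]
        have h2 : (∫ ω, B ω^2 ∂P) * c₂ ≤ σ^2*h*(1+m) * c₂ :=
          mul_le_mul_of_nonneg_right hintB hc₂0
        have h3 : (0:ℝ) ≤ 2*|μ| + μ^2 := by positivity
        nlinarith [mul_nonneg (mul_nonneg hh.le hm0) hc₂0,
          mul_nonneg hh.le hm0, mul_nonneg h3 (mul_nonneg hh.le hm0),
          mul_nonneg (mul_nonneg (sq_nonneg σ) hh.le) hc₂0]
      have step2 : (1 + D*h) * (m+1) ≤ Real.exp (D*h) * (m+1) :=
        mul_le_mul_of_nonneg_right (by linarith [Real.add_one_le_exp (D*h)])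
          (by linarith)
      have step3 : Real.exp (D*h) * (m+1)
          ≤ Real.exp (D*h) * (Real.exp (D*(h*k)) * (X₀^2+1)) :=
        mul_le_mul_of_nonneg_left hb (Real.exp_nonneg _)
      have step4 : Real.exp (D*h) * (Real.exp (D*(h*k)) * (X₀^2+1))
          = Real.exp (D*(h*(k+1:ℕ))) * (X₀^2+1) := by
        rw [show Real.exp (D*h) * (Real.exp (D*(h*(k:ℕ))) * (X₀^2+1))
            = (Real.exp (D*h) * Real.exp (D*(h*(k:ℕ)))) * (X₀^2+1) by ring,
          ← Real.exp_add]
        congr 2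
        push_cast
        ring
      push_cast at step4 ⊢
      linarith
  -- conclude
  obtain ⟨hL2, hbound⟩ := key k hk
  have hint : Integrable (fun ω => (X n k ω)^2) P :=
    (memLp_two_iff_integrable_sq (hXm n k).aestronglyMeasurable).1 hL2
  rw [← ofReal_integral_eq_lintegral_ofReal hint (ae_of_all _ fun ω => sq_nonneg _)]
  apply ENNReal.ofReal_le_ofReal
  have hkT : h * k ≤ T := by
    rw [hhdef, div_mul_eq_mul_div, div_le_iff₀ hnpos]
    have : (k:ℝ) ≤ n := by exact_mod_cast hk
    nlinarith
  have hexp2 : Real.exp (D*(h*k)) ≤ Real.exp (D*T) :=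
    Real.exp_le_exp.2 (mul_le_mul_of_nonneg_left hkT hD0)
  have h5 : Real.exp (D*(h*k))*(X₀^2+1) ≤ Real.exp (D*T)*(X₀^2+1) :=
    mul_le_mul_of_nonneg_right hexp2 (by positivity)
  linarith
end
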